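/- Suppose P0, P1 : ℕ → ℝ satisfy the steady-state CME of the generalized ON-OFF model with rate functions K1, K2, K3 : ℕ → ℝ, and set P(n) = P0(n) + P1(n). Let (a_n), (b_n), (c_n), (d_n) be the paper's auxiliary sequences associated with K1, K2, K3. Then for every n ≥ 1, P1(n) = (1/n!)·[(a_n + c_n)·P(0) − (b_n + d_n)·P0(0)]. -/
import Mathlib


open Finset

/-- Formula (10) of the paper: for solutions of the steady-state CME of the
generalized ON-OFF model, with the paper's auxiliary sequences `a`, `b`, `c`, `d`,
one has `P1(n) = (1/n!)·[(a_n+c_n)·P(0) − (b_n+d_n)·P0(0)]` for `n ≥ 1`. -/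
theorem cme_P1_formal_expression (K1 K2 K3 P0 P1 P a b c d : ℕ → ℝ)
    (hCME0 : ∀ n : ℕ,
      -K1 n * P0 n + K2 n * P1 n + ((n : ℝ) + 1) * P0 (n + 1) - (n : ℝ) * P0 n = 0)
    (hCME1 : ∀ n : ℕ,
      K1 n * P0 n - K2 n * P1 n + (if n = 0 then 0 else K3 (n - 1) * P1 (n - 1))
        - K3 n * P1 n + ((n : ℝ) + 1) * P1 (n + 1) - (n : ℝ) * P1 n = 0)
    (hP : ∀ n : ℕ, P n = P0 n + P1 n)
    (ha1 : a 1 = K3 0)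
    (haRec : ∀ n : ℕ, 2 ≤ n →
      a n = K3 (n - 1) * a (n - 1)
        + K3 (n - 1) * ∑ i ∈ Finset.Icc 1 (n - 2), K2 i * a i *
            ∏ j ∈ Finset.Icc (i + 1) (n - 2), ((j : ℝ) + K1 j + K2 j)
        + K3 (n - 1) * K2 0 * ∏ i ∈ Finset.Icc 1 (n - 2), ((i : ℝ) + K1 i + K2 i))
    (hb1 : b 1 = K3 0)
    (hbRec : ∀ n : ℕ, 2 ≤ n →
      b n = K3 (n - 1) * b (n - 1)
        + K3 (n - 1) * ∑ i ∈ Finset.Icc 1 (n - 2), K2 i * b i *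
            ∏ j ∈ Finset.Icc (i + 1) (n - 2), ((j : ℝ) + K1 j + K2 j)
        + K3 (n - 1) * ∏ i ∈ Finset.range (n - 1), ((i : ℝ) + K1 i + K2 i))
    (hc : ∀ n : ℕ, 1 ≤ n →
      c n = ∑ i ∈ Finset.Icc 1 (n - 1), K2 i * a i *
            ∏ j ∈ Finset.Icc (i + 1) (n - 1), ((j : ℝ) + K1 j + K2 j)
        + K2 0 * ∏ i ∈ Finset.Icc 1 (n - 1), ((i : ℝ) + K1 i + K2 i))
    (hd : ∀ n : ℕ, 1 ≤ n →
      d n = ∑ i ∈ Finset.Icc 1 (n - 1), K2 i * b i *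
            ∏ j ∈ Finset.Icc (i + 1) (n - 1), ((j : ℝ) + K1 j + K2 j)
        + ∏ i ∈ Finset.range n, ((i : ℝ) + K1 i + K2 i)) :
    ∀ n : ℕ, 1 ≤ n →
      P1 n = (1 / (n.factorial : ℝ)) * ((a n + c n) * P 0 - (b n + d n) * P0 0) := by

  -- Key telescoping identity: (n+1)·P(n+1) = K3(n)·P1(n)
  have hkey1 : ∀ n : ℕ, ((n : ℝ) + 1) * P (n + 1) = K3 n * P1 n := by
    intro n
    induction n with
    | zero =>
      have h0 := hCME0 0
      have h1 := hCME1 0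
      simp only [if_pos rfl] at h1
      have := hP 1
      push_cast at h0 h1 ⊢
      linarith
    | succ n ih =>
      have h0 := hCME0 (n + 1)
      have h1 := hCME1 (n + 1)
      simp only [Nat.add_sub_cancel, if_neg (Nat.succ_ne_zero n)] at h1
      have hp1 := hP (n + 1)
      have hp2 := hP (n + 2)
      push_cast at h0 h1 ih ⊢
      linear_combination h0 + h1 + ((n:ℝ)+2) * hp2 - ((n:ℝ)+1) * hp1 + ih
  -- Second recurrence: (n+1)·P0(n+1) = (n+K1+K2)·P0(n) − K2·P(n)
  have hkey2 : ∀ n : ℕ, ((n : ℝ) + 1) * P0 (n + 1)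
      = ((n : ℝ) + K1 n + K2 n) * P0 n - K2 n * P n := by
    intro n
    have h0 := hCME0 n
    have hp := hP n
    linear_combination h0 + K2 n * hp
  -- Main simultaneous induction
  have main : ∀ n : ℕ, 1 ≤ n →
      ((n.factorial : ℝ)) * P n = a n * P 0 - b n * P0 0 ∧
      ((n.factorial : ℝ)) * P0 n = d n * P0 0 - c n * P 0 := by
    intro n
    induction n with
    | zero => omega
    | succ n ih =>
      intro _
      rcases Nat.eq_zero_or_pos n with h0 | hn
      · subst h0
        have hc1 := hc 1 le_rfl
        have hd1 := hd 1 le_rfl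
        rw [show (1:ℕ) - 1 = 0 from rfl,
            show Finset.Icc 1 0 = (∅ : Finset ℕ) from Finset.Icc_eq_empty (by omega)] at hc1 hd1
        simp only [Finset.sum_empty, Finset.prod_empty, Finset.prod_range_one,
          Nat.cast_zero, mul_one, zero_add] at hc1 hd1
        have e1 := hkey1 0
        have e2 := hkey2 0
        have hp0 := hP 0
        have hp1 := hP 1
        push_cast at e1 e2 ⊢
        constructor
        · rw [ha1, hb1]; simp only [Nat.factorial_one, Nat.cast_one]
          linear_combination e1 - K3 0 * hp0
        · rw [hc1, hd1]; simp only [Nat.factorial_one, Nat.cast_one]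
          linear_combination e2
      · obtain ⟨m, rfl⟩ : ∃ m, n = m + 1 := ⟨n - 1, by omega⟩
        obtain ⟨ih1, ih2⟩ := ih (by omega)
        -- the four recurrences for a, b, c, d
        have hA : a (m + 2) = K3 (m + 1) * (a (m + 1) + c (m + 1)) := by
          have e := haRec (m + 2) (by omega)
          have ec := hc (m + 1) (by omega)
          rw [show m + 2 - 1 = m + 1 from rfl, show m + 2 - 2 = m from rfl] at e
          rw [show m + 1 - 1 = m from rfl] at ec
          rw [e, ec]; ring
        have hB : b (m + 2) = K3 (m + 1) * (b (m + 1) + d (m + 1)) := by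
          have e := hbRec (m + 2) (by omega)
          have ed := hd (m + 1) (by omega)
          rw [show m + 2 - 1 = m + 1 from rfl, show m + 2 - 2 = m from rfl] at e
          rw [show m + 1 - 1 = m from rfl] at ed
          rw [e, ed]; ring
        have hC : c (m + 2)
            = (((m:ℝ) + 1) + K1 (m + 1) + K2 (m + 1)) * c (m + 1)
              + K2 (m + 1) * a (m + 1) := by
          have e := hc (m + 2) (by omega)
          have ec := hc (m + 1) (by omega)
          rw [show m + 2 - 1 = m + 1 from rfl] at e
          rw [show m + 1 - 1 = m from rfl] at ec
          rw [Finset.sum_Icc_succ_top (by omega : 1 ≤ m + 1),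
              show Finset.Icc (m + 1 + 1) (m + 1) = (∅ : Finset ℕ) from
                Finset.Icc_eq_empty (by omega),
              Finset.prod_Icc_succ_top (by omega : 1 ≤ m + 1)] at e
          have hs : ∑ i ∈ Finset.Icc 1 m, K2 i * a i *
                ∏ j ∈ Finset.Icc (i + 1) (m + 1), ((j : ℝ) + K1 j + K2 j)
              = (∑ i ∈ Finset.Icc 1 m, K2 i * a i *
                ∏ j ∈ Finset.Icc (i + 1) m, ((j : ℝ) + K1 j + K2 j))
                * (((m + 1 : ℕ) : ℝ) + K1 (m + 1) + K2 (m + 1)) := by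
            rw [Finset.sum_mul]
            refine Finset.sum_congr rfl fun i hi => ?_
            have hi' : i ≤ m := (Finset.mem_Icc.mp hi).2
            rw [Finset.prod_Icc_succ_top (by omega : i + 1 ≤ m + 1)]
            ring
          rw [hs] at e
          rw [e, ec]
          push_cast
          ring
        have hD : d (m + 2)
            = (((m:ℝ) + 1) + K1 (m + 1) + K2 (m + 1)) * d (m + 1)
              + K2 (m + 1) * b (m + 1) := by
          have e := hd (m + 2) (by omega)
          have ed := hd (m + 1) (by omega)
          rw [show m + 2 - 1 = m + 1 from rfl] at e
          rw [show m + 1 - 1 = m from rfl] at ed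
          rw [Finset.sum_Icc_succ_top (by omega : 1 ≤ m + 1),
              show Finset.Icc (m + 1 + 1) (m + 1) = (∅ : Finset ℕ) from
                Finset.Icc_eq_empty (by omega),
              Finset.prod_range_succ] at e
          have hs : ∑ i ∈ Finset.Icc 1 m, K2 i * b i *
                ∏ j ∈ Finset.Icc (i + 1) (m + 1), ((j : ℝ) + K1 j + K2 j)
              = (∑ i ∈ Finset.Icc 1 m, K2 i * b i *
                ∏ j ∈ Finset.Icc (i + 1) m, ((j : ℝ) + K1 j + K2 j))
                * (((m + 1 : ℕ) : ℝ) + K1 (m + 1) + K2 (m + 1)) := by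
            rw [Finset.sum_mul]
            refine Finset.sum_congr rfl fun i hi => ?_
            have hi' : i ≤ m := (Finset.mem_Icc.mp hi).2
            rw [Finset.prod_Icc_succ_top (by omega : i + 1 ≤ m + 1)]
            ring
          rw [hs] at e
          rw [e, ed]
          push_cast
          ring
        have e1 := hkey1 (m + 1)
        have e2 := hkey2 (m + 1)
        have hp := hP (m + 1)
        have hfac : ((m + 2).factorial : ℝ) = ((m : ℝ) + 2) * ((m + 1).factorial : ℝ) := by
          rw [Nat.factorial_succ]; push_cast; ring
        push_cast at e1 e2
        constructor
        · rw [hfac, hA, hB]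
          linear_combination ((m + 1).factorial : ℝ) * e1 + K3 (m + 1) * ih1
            - K3 (m + 1) * ih2 - K3 (m + 1) * ((m + 1).factorial : ℝ) * hp
        · rw [hfac, hC, hD]
          linear_combination ((m + 1).factorial : ℝ) * e2
            + (((m:ℝ) + 1) + K1 (m + 1) + K2 (m + 1)) * ih2 - K2 (m + 1) * ih1
  intro n hn
  obtain ⟨h1, h2⟩ := main n hn
  have hfac : ((n.factorial : ℝ)) ≠ 0 := Nat.cast_ne_zero.mpr n.factorial_ne_zero
  have hp := hP n
  field_simp
  linear_combination h1 - h2 - (n.factorial : ℝ) * hp
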